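/- Let A be an associative algebra over ℚ(q) with elements (e_n)_{n∈ℤ} satisfying e_{m+1}e_n − q²·e_m e_{n+1} = q²·e_n e_{m+1} − e_{n+1}e_m for all m,n ∈ ℤ. Then for all n ∈ ℤ and all integers k ≥ 0: e_{n+2k+1}e_n = q²·e_n e_{n+2k+1} + (q⁴ − 1)·Σ_{j=1}^{k} q^{2(j-1)} e_{n+j} e_{n+2k+1−j}. -/
import Mathlib


open Finset

private lemma sum_Icc_one_eq_range {M : Type*} [AddCommMonoid M] (f : ℕ → M) (k : ℕ) :
    ∑ j ∈ Icc 1 k, f j = ∑ i ∈ range k, f (i + 1) := by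
  induction k with
  | zero => simp
  | succ k ih =>
    rw [Finset.sum_Icc_succ_top (by omega), ih, Finset.sum_range_succ]

private lemma two_ne_zero_ratfunc : (2 : RatFunc ℚ) ≠ 0 := by
  have h := RatFunc.algebraMap_injective ℚ
  intro h2
  have h3 : algebraMap (Polynomial ℚ) (RatFunc ℚ) 2 = algebraMap (Polynomial ℚ) (RatFunc ℚ) 0 := by
    rw [map_ofNat, map_zero, h2]
  have := h h3
  norm_num at this

private lemma half_cancel {A : Type*} [Ring A] [Algebra (RatFunc ℚ) A] (x : A) :
    algebraMap (RatFunc ℚ) A 2⁻¹ * (x + x) = x := by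
  rw [← two_mul, ← mul_assoc, ← map_ofNat (algebraMap (RatFunc ℚ) A) 2, ← map_mul,
    inv_mul_cancel₀ two_ne_zero_ratfunc, map_one, one_mul]

theorem mode_relation_odd_distance {A : Type*} [Ring A] [Algebra (RatFunc ℚ) A]
    (e : ℤ → A)
    (h : ∀ m n : ℤ,
      e (m + 1) * e n - algebraMap (RatFunc ℚ) A (RatFunc.X ^ 2) * (e m * e (n + 1)) =
        algebraMap (RatFunc ℚ) A (RatFunc.X ^ 2) * (e n * e (m + 1)) - e (n + 1) * e m) :
    ∀ n : ℤ, ∀ k : ℕ,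
      e (n + 2 * k + 1) * e n =
        algebraMap (RatFunc ℚ) A (RatFunc.X ^ 2) * (e n * e (n + 2 * k + 1)) +
          (algebraMap (RatFunc ℚ) A (RatFunc.X ^ 4) - 1) *
            ∑ j ∈ Icc 1 k,
              algebraMap (RatFunc ℚ) A (RatFunc.X ^ (2 * (j - 1))) *
                (e (n + j) * e (n + 2 * k + 1 - j)) := by
  set t : A := algebraMap (RatFunc ℚ) A (RatFunc.X ^ 2) with ht
  set T : A := algebraMap (RatFunc ℚ) A (RatFunc.X ^ 4) with hT
  have hTt : T = t * t := by rw [ht, hT, ← map_mul]; ring_nf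
  have hcomm : t * T = T * t := by rw [ht, hT, ← map_mul, ← map_mul]; ring_nf
  have hc1 : ∀ z : A, t * ((T - 1) * z) = (T - 1) * (t * z) := fun z => by
    calc t * ((T - 1) * z) = (t * T - t * 1) * z := by rw [← mul_assoc, mul_sub]
      _ = (T * t - 1 * t) * z := by rw [hcomm, mul_one, one_mul]
      _ = (T - 1) * (t * z) := by rw [← sub_mul, mul_assoc]
  intro n k
  induction k generalizing n with
  | zero =>
    simp only [Nat.cast_zero, mul_zero, add_zero, show Icc 1 0 = (∅ : Finset ℕ) from rfl,
      sum_empty]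
    have h0 := sub_eq_sub_iff_add_eq_add.mp (h n n)
    calc e (n + 1) * e n
        = algebraMap (RatFunc ℚ) A 2⁻¹ * (e (n + 1) * e n + e (n + 1) * e n) :=
          (half_cancel _).symm
      _ = _ := by rw [h0, half_cancel]
  | succ k ih =>
    simp only [Nat.cast_add, Nat.cast_one]
    rw [show n + 2 * ((k : ℤ) + 1) + 1 = n + 2 * k + 3 by ring]
    rw [sum_Icc_one_eq_range, Finset.sum_range_succ']
    have step := h (n + 2 * (k : ℤ) + 2) n
    rw [show n + 2 * (k : ℤ) + 2 + 1 = n + 2 * k + 3 by ring] at step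
    have step' : e (n + 2 * (k : ℤ) + 3) * e n =
        t * (e n * e (n + 2 * (k : ℤ) + 3)) + t * (e (n + 2 * k + 2) * e (n + 1))
          - e (n + 1) * e (n + 2 * k + 2) := by
      have := sub_eq_iff_eq_add.mp step
      rw [this]; abel
    have ihh := ih (n + 1)
    rw [show n + 1 + 2 * (k : ℤ) + 1 = n + 2 * k + 2 by ring] at ihh
    rw [sum_Icc_one_eq_range] at ihh
    rw [step', ihh]
    simp only [Nat.add_sub_cancel, Nat.cast_add, Nat.cast_one, Nat.cast_zero, Nat.cast_ofNat,
      mul_zero, pow_zero, map_one, one_mul, zero_add]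
    rw [show n + 2 * (k : ℤ) + 3 - 1 = n + 2 * (k : ℤ) + 2 by ring]
    simp only [show (2 * (1 - 1) : ℕ) = 0 from rfl, pow_zero, map_one, one_mul]
    rw [mul_add]
    have hterm : ∀ x ∈ Finset.range k,
        t * ((T - 1) * (algebraMap (RatFunc ℚ) A (RatFunc.X ^ (2 * x)) *
            (e (n + 1 + ((x : ℤ) + 1)) * e (n + 2 * (k : ℤ) + 2 - ((x : ℤ) + 1))))) =
        (T - 1) * (algebraMap (RatFunc ℚ) A (RatFunc.X ^ (2 * (x + 1))) *
            (e (n + ((x : ℤ) + 1 + 1)) * e (n + 2 * (k : ℤ) + 3 - ((x : ℤ) + 1 + 1)))) := by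
      intro x _
      rw [hc1]
      congr 1
      rw [← mul_assoc, ht, ← map_mul, ← pow_add,
        show 2 + 2 * x = 2 * (x + 1) by ring,
        show n + 1 + ((x : ℤ) + 1) = n + ((x : ℤ) + 1 + 1) by ring,
        show n + 2 * (k : ℤ) + 2 - ((x : ℤ) + 1) = n + 2 * (k : ℤ) + 3 - ((x : ℤ) + 1 + 1) by ring]
    have hsum : t * ((T - 1) * ∑ x ∈ Finset.range k,
          algebraMap (RatFunc ℚ) A (RatFunc.X ^ (2 * x)) *
            (e (n + 1 + ((x : ℤ) + 1)) * e (n + 2 * (k : ℤ) + 2 - ((x : ℤ) + 1)))) =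
        (T - 1) * ∑ x ∈ Finset.range k,
          algebraMap (RatFunc ℚ) A (RatFunc.X ^ (2 * (x + 1))) *
            (e (n + ((x : ℤ) + 1 + 1)) * e (n + 2 * (k : ℤ) + 3 - ((x : ℤ) + 1 + 1))) := by
      rw [mul_sum, mul_sum, Finset.sum_congr rfl hterm, ← Finset.mul_sum]
    rw [hsum, hTt, mul_add]
    noncomm_ring
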